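/- Let E be a real vector space and (Ω, F, P) a probability space. Suppose that for each a ∈ E we are given σ_a ≥ 0 and a real random variable W_a with E[W_a] = 0 and E[W_a²] = 1, such that for all a, b ∈ E and β ∈ ℝ: σ_{a+b} W_{a+b} = σ_a W_a + σ_b W_b almost surely, and σ_{βa} W_{βa} = β σ_a W_a almost surely. Then the function s : E → ℝ, s(a) := σ_a², is a quadratic form: s(βa) = β² s(a) for all β ∈ ℝ, a ∈ E, and the map Q : E × E → ℝ, Q(a,b) := s(a+b) − s(a) − s(b), is a symmetric bilinear form. -/

import Mathlib

open MeasureTheory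

/-- If σ_a W_a depends additively and ℝ-homogeneously (almost surely) on
a ∈ E, where W_a are centred with unit second moment, then s(a) := σ_a² is a quadratic
form: s(βa) = β²s(a), and Q(a,b) := s(a+b) − s(a) − s(b) is a symmetric bilinear form. -/
theorem gaussian_part_quadratic_form
    {E Ω : Type*} [AddCommGroup E] [Module ℝ E]
    [MeasurableSpace Ω] (P : Measure Ω) [IsProbabilityMeasure P]
    (σ : E → ℝ) (hσ : ∀ a, 0 ≤ σ a)
    (W : E → Ω → ℝ)
    (hW2 : ∀ a, MemLp (W a) 2 P)
    (hmean : ∀ a, ∫ ω, W a ω ∂P = 0)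
    (hvar : ∀ a, ∫ ω, (W a ω) ^ 2 ∂P = 1)
    (hadd : ∀ a b : E,
      ∀ᵐ ω ∂P, σ (a + b) * W (a + b) ω = σ a * W a ω + σ b * W b ω)
    (hsmul : ∀ (β : ℝ) (a : E),
      ∀ᵐ ω ∂P, σ (β • a) * W (β • a) ω = β * (σ a * W a ω)) :
    (∀ (β : ℝ) (a : E), σ (β • a) ^ 2 = β ^ 2 * σ a ^ 2)
      ∧ (∀ a b : E,
          σ (a + b) ^ 2 - σ a ^ 2 - σ b ^ 2 = σ (b + a) ^ 2 - σ b ^ 2 - σ a ^ 2)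
      ∧ (∀ a a' b : E,
          σ (a + a' + b) ^ 2 - σ (a + a') ^ 2 - σ b ^ 2
            = (σ (a + b) ^ 2 - σ a ^ 2 - σ b ^ 2)
              + (σ (a' + b) ^ 2 - σ a' ^ 2 - σ b ^ 2))
      ∧ (∀ (β : ℝ) (a b : E),
          σ (β • a + b) ^ 2 - σ (β • a) ^ 2 - σ b ^ 2
            = β * (σ (a + b) ^ 2 - σ a ^ 2 - σ b ^ 2)) := by
  set X : E → Ω → ℝ := fun a ω => σ a * W a ω with hX
  have hXmem : ∀ a, MemLp (X a) 2 P := fun a => (hW2 a).const_mul _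
  have hsqint : ∀ a, Integrable (fun ω => (X a ω) ^ 2) P := fun a =>
    (hXmem a).integrable_sq
  have hmul : ∀ a b, Integrable (fun ω => X a ω * X b ω) P := fun a b => by
    have h : (fun ω => X a ω * X b ω)
        = fun ω => ((X a ω + X b ω) ^ 2 - (X a ω) ^ 2 - (X b ω) ^ 2) / 2 := by
      funext ω; ring
    rw [h]
    exact ((((hXmem a).add (hXmem b)).integrable_sq.sub (hsqint a)).sub
      (hsqint b)).div_const 2
  have hXsq : ∀ a, ∫ ω, (X a ω) ^ 2 ∂P = σ a ^ 2 := by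
    intro a
    have h : ∀ ω, (X a ω) ^ 2 = σ a ^ 2 * (W a ω) ^ 2 := fun ω => by
      simp only [hX]; ring
    simp only [h]
    rw [integral_const_mul, hvar a, mul_one]
  set f : E → E → ℝ := fun a b => ∫ ω, X a ω * X b ω ∂P with hf
  have hQ : ∀ a b, σ (a + b) ^ 2 - σ a ^ 2 - σ b ^ 2 = 2 * f a b := by
    intro a b
    have h1 : ∫ ω, (X (a + b) ω) ^ 2 ∂P
        = ∫ ω, ((X a ω) ^ 2 + (X b ω) ^ 2 + 2 * (X a ω * X b ω)) ∂P := by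
      refine integral_congr_ae ?_
      filter_upwards [hadd a b] with ω hω
      simp only [hX] at hω ⊢
      rw [hω]; ring
    rw [hXsq] at h1
    rw [integral_add (by exact (hsqint a).add (hsqint b)) ((hmul a b).const_mul 2),
      integral_add (hsqint a) (hsqint b), hXsq, hXsq, integral_const_mul] at h1
    simp only [hf]
    linarith [h1]
  have hhom : ∀ (β : ℝ) (a : E), σ (β • a) ^ 2 = β ^ 2 * σ a ^ 2 := by
    intro β a
    have h1 : ∫ ω, (X (β • a) ω) ^ 2 ∂P = ∫ ω, β ^ 2 * (X a ω) ^ 2 ∂P := by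
      refine integral_congr_ae ?_
      filter_upwards [hsmul β a] with ω hω
      simp only [hX] at hω ⊢
      rw [hω]; ring
    rwa [hXsq, integral_const_mul, hXsq] at h1
  have hfsymm : ∀ a b, f a b = f b a := by
    intro a b
    simp only [hf]
    exact integral_congr_ae (Filter.Eventually.of_forall fun ω => mul_comm _ _)
  have hfadd : ∀ a a' b, f (a + a') b = f a b + f a' b := by
    intro a a' b
    have h1 : ∫ ω, X (a + a') ω * X b ω ∂P
        = ∫ ω, (X a ω * X b ω + X a' ω * X b ω) ∂P := by
      refine integral_congr_ae ?_
      filter_upwards [hadd a a'] with ω hω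
      simp only [hX] at hω ⊢
      rw [hω]; ring
    simp only [hf]
    rw [h1, integral_add (hmul a b) (hmul a' b)]
  have hfsmul : ∀ (β : ℝ) (a b : E), f (β • a) b = β * f a b := by
    intro β a b
    have h1 : ∫ ω, X (β • a) ω * X b ω ∂P = ∫ ω, β * (X a ω * X b ω) ∂P := by
      refine integral_congr_ae ?_
      filter_upwards [hsmul β a] with ω hω
      simp only [hX] at hω ⊢
      rw [hω]; ring
    simp only [hf]
    rw [h1, integral_const_mul]
  refine ⟨hhom, ?_, ?_, ?_⟩
  · intro a b; rw [hQ, hQ, hfsymm]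
  · intro a a' b; rw [hQ, hQ, hQ, hfadd]; ring
  · intro β a b; rw [hQ, hQ, hfsmul]; ring
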